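/- Suppose [a, b] is a P_M-maximizing interval and [a', b'] is a P_{M'}-maximizing interval with M' > M. If a' < a then b' ≥ b; equivalently, if b' < b then a' ≥ a; and in all cases a' ≥ a or b' ≥ b. -/
import Mathlib

def hyperPMF (M n N x : ℕ) : ℚ :=
  if x ≤ n then (M.choose x * (N - M).choose (n - x) : ℚ) / (N.choose n) else 0

/-- The interval [a,b] ⊆ {0,…,n} is P_M-maximizing: all its points have positive
probability and it maximizes P_M-probability among subsets of the same cardinality. -/
def PMaximizingInterval (n N M a b : ℕ) : Prop :=
  a ≤ b ∧ b ≤ n ∧ (∀ x ∈ Finset.Icc a b, 0 < hyperPMF M n N x) ∧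
    ∀ T : Finset ℕ, T ⊆ Finset.range (n + 1) → T.card = b - a + 1 →
      (∑ x ∈ T, hyperPMF M n N x) ≤ ∑ x ∈ Finset.Icc a b, hyperPMF M n N x

lemma hyperPMF_nonneg (M n N x : ℕ) : 0 ≤ hyperPMF M n N x := by
  unfold hyperPMF
  split <;> positivity

lemma hyperPMF_pos_imp (M n N x : ℕ) (h : 0 < hyperPMF M n N x) :
    x ≤ n ∧ x ≤ M ∧ n - x ≤ N - M := by
  unfold hyperPMF at h
  split at h
  · rename_i hxn
    rcases div_pos_iff.mp h with ⟨hnum, _⟩ | ⟨_, hden⟩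
    · have h1 : 0 < M.choose x := by
        by_contra hc
        have : M.choose x = 0 := by omega
        rw [this] at hnum; simp at hnum
      have h2 : 0 < (N - M).choose (n - x) := by
        by_contra hc
        have : (N - M).choose (n - x) = 0 := by omega
        rw [this] at hnum; simp at hnum
      have := Nat.choose_eq_zero_iff (n := M) (k := x)
      have := Nat.choose_eq_zero_iff (n := N - M) (k := n - x)
      refine ⟨hxn, ?_, ?_⟩ <;> omega
    · exfalso
      have : (0:ℚ) ≤ (N.choose n : ℚ) := by positivity
      linarith
  · exact absurd h (lt_irrefl 0)

/-- Swap lemma: in a maximizing interval, any inside point has pmf ≥ any outside point. -/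
lemma swap_le (n N M a b : ℕ) (h : PMaximizingInterval n N M a b)
    (y z : ℕ) (hy : y ∈ Finset.Icc a b) (hz : z ≤ n) (hz' : z ∉ Finset.Icc a b) :
    hyperPMF M n N z ≤ hyperPMF M n N y := by
  obtain ⟨hab, hbn, _, hmax⟩ := h
  have hzny : z ∉ (Finset.Icc a b).erase y := fun hc => hz' (Finset.mem_of_mem_erase hc)
  have hcard : (insert z ((Finset.Icc a b).erase y)).card = b - a + 1 := by
    rw [Finset.card_insert_of_notMem hzny, Finset.card_erase_of_mem hy, Nat.card_Icc]
    omega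
  have hsub : insert z ((Finset.Icc a b).erase y) ⊆ Finset.range (n + 1) := by
    intro w hw
    rcases Finset.mem_insert.mp hw with rfl | hw
    · exact Finset.mem_range.mpr (by omega)
    · have := Finset.mem_Icc.mp (Finset.mem_of_mem_erase hw)
      exact Finset.mem_range.mpr (by omega)
  have hle := hmax _ hsub hcard
  rw [Finset.sum_insert hzny] at hle
  have hsplit : hyperPMF M n N y + ∑ x ∈ (Finset.Icc a b).erase y, hyperPMF M n N x
      = ∑ x ∈ Finset.Icc a b, hyperPMF M n N x := Finset.add_sum_erase _ _ hy
  linarith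

/-- One step of strict likelihood-ratio monotonicity, in ℕ. -/
lemma lr_step (N M M' n x : ℕ) (hMM' : M < M') (hM'N : M' ≤ N)
    (hxM : x + 1 ≤ M) (hxn : x + 1 ≤ n) (hj : n - x ≤ N - M') :
    M'.choose x * (N - M').choose (n - x) * (M.choose (x + 1) * (N - M).choose (n - (x + 1)))
      < M'.choose (x + 1) * (N - M').choose (n - (x + 1)) *
        (M.choose x * (N - M).choose (n - x)) := by
  set j := n - x with hjdef
  have hj1 : 1 ≤ j := by omega
  have hnx1 : n - (x + 1) = j - 1 := by omega
  rw [hnx1]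
  have e_a : M'.choose (x + 1) * (x + 1) = M'.choose x * (M' - x) :=
    Nat.choose_succ_right_eq M' x
  have e_c : M.choose (x + 1) * (x + 1) = M.choose x * (M - x) :=
    Nat.choose_succ_right_eq M x
  have hjeq : j - 1 + 1 = j := by omega
  have e_b : (N - M').choose j * j = (N - M').choose (j - 1) * (N - M' - (j - 1)) := by
    have := Nat.choose_succ_right_eq (N - M') (j - 1)
    rwa [hjeq] at this
  have e_d : (N - M).choose j * j = (N - M).choose (j - 1) * (N - M - (j - 1)) := by
    have := Nat.choose_succ_right_eq (N - M) (j - 1)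
    rwa [hjeq] at this
  have key : (N - M' - (j - 1)) * (M - x) < (M' - x) * (N - M - (j - 1)) := by
    have h1 : N - M' - (j - 1) + 1 ≤ N - M - (j - 1) := by omega
    have h2 : M - x + 1 ≤ M' - x := by omega
    calc (N - M' - (j - 1)) * (M - x)
        < (N - M' - (j - 1) + 1) * (M - x + 1) := by nlinarith
      _ ≤ (N - M - (j - 1)) * (M' - x) := Nat.mul_le_mul h1 h2
      _ = (M' - x) * (N - M - (j - 1)) := Nat.mul_comm _ _
  have Dpos : 0 < M'.choose x * (N - M').choose (j - 1) * M.choose x * (N - M).choose (j - 1) := by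
    have p1 : 0 < M'.choose x := Nat.choose_pos (by omega)
    have p2 : 0 < (N - M').choose (j - 1) := Nat.choose_pos (by omega)
    have p3 : 0 < M.choose x := Nat.choose_pos (by omega)
    have p4 : 0 < (N - M).choose (j - 1) := Nat.choose_pos (by omega)
    positivity
  have hkpos : 0 < (x + 1) * j := by positivity
  refine (Nat.mul_lt_mul_right hkpos).mp ?_
  calc M'.choose x * (N - M').choose j * (M.choose (x + 1) * (N - M).choose (j - 1)) * ((x + 1) * j)
      = ((N - M').choose j * j) * (M.choose (x + 1) * (x + 1)) *
          (M'.choose x * (N - M).choose (j - 1)) := by ring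
    _ = ((N - M').choose (j - 1) * (N - M' - (j - 1))) * (M.choose x * (M - x)) *
          (M'.choose x * (N - M).choose (j - 1)) := by rw [e_b, e_c]
    _ = (M'.choose x * (N - M').choose (j - 1) * M.choose x * (N - M).choose (j - 1)) *
          ((N - M' - (j - 1)) * (M - x)) := by ring
    _ < (M'.choose x * (N - M').choose (j - 1) * M.choose x * (N - M).choose (j - 1)) *
          ((M' - x) * (N - M - (j - 1))) := (Nat.mul_lt_mul_left Dpos).mpr key
    _ = (M'.choose (x + 1) * (x + 1)) * ((N - M).choose j * j) *
          (M.choose x * (N - M').choose (j - 1)) := by rw [e_a, e_d]; ring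
    _ = M'.choose (x + 1) * (N - M').choose (j - 1) * (M.choose x * (N - M).choose j) *
          ((x + 1) * j) := by ring

/-- Chained strict likelihood-ratio monotonicity, in ℕ. -/
lemma lr_chain (N M M' n : ℕ) (hMM' : M < M') (hM'N : M' ≤ N) :
    ∀ x2 x1 : ℕ, x1 < x2 → x2 ≤ M → x2 ≤ n → n - x1 ≤ N - M' →
    M'.choose x1 * (N - M').choose (n - x1) * (M.choose x2 * (N - M).choose (n - x2))
      < M'.choose x2 * (N - M').choose (n - x2) *
        (M.choose x1 * (N - M).choose (n - x1)) := by
  intro x2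
  induction x2 with
  | zero => intro x1 h; omega
  | succ x ih =>
    intro x1 hlt hM hn hj
    have hjx : n - x ≤ N - M' := by omega
    have hstep := lr_step N M M' n x hMM' hM'N hM hn hjx
    rcases Nat.lt_or_ge x1 x with h | h
    · have hih := ih x1 h (by omega) (by omega) hj
      have fxpos : 0 < M'.choose x * (N - M').choose (n - x) := by
        have p1 : 0 < M'.choose x := Nat.choose_pos (by omega)
        have p2 : 0 < (N - M').choose (n - x) := Nat.choose_pos (by omega)
        positivity
      have gxpos : 0 < M.choose x * (N - M).choose (n - x) := by
        have p1 : 0 < M.choose x := Nat.choose_pos (by omega)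
        have p2 : 0 < (N - M).choose (n - x) := Nat.choose_pos (by omega)
        positivity
      have hmul := Nat.mul_lt_mul_of_lt_of_lt hih hstep
      have hpos : 0 < (M'.choose x * (N - M').choose (n - x)) *
          (M.choose x * (N - M).choose (n - x)) := by positivity
      refine (Nat.mul_lt_mul_right hpos).mp ?_
      calc M'.choose x1 * (N - M').choose (n - x1) *
            (M.choose (x + 1) * (N - M).choose (n - (x + 1))) *
            ((M'.choose x * (N - M').choose (n - x)) * (M.choose x * (N - M).choose (n - x)))
          = (M'.choose x1 * (N - M').choose (n - x1) * (M.choose x * (N - M).choose (n - x))) *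
            (M'.choose x * (N - M').choose (n - x) *
              (M.choose (x + 1) * (N - M).choose (n - (x + 1)))) := by ring
        _ < (M'.choose x * (N - M').choose (n - x) *
              (M.choose x1 * (N - M).choose (n - x1))) *
            (M'.choose (x + 1) * (N - M').choose (n - (x + 1)) *
              (M.choose x * (N - M).choose (n - x))) := hmul
        _ = M'.choose (x + 1) * (N - M').choose (n - (x + 1)) *
              (M.choose x1 * (N - M).choose (n - x1)) *
            ((M'.choose x * (N - M').choose (n - x)) *
              (M.choose x * (N - M).choose (n - x))) := by ring
    · have hx1 : x1 = x := by omega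
      subst hx1
      exact hstep

/-- If [a,b] is P_M-maximizing and [a',b'] is P_{M'}-maximizing with M' > M, then
a' < a implies b' ≥ b; equivalently b' < b implies a' ≥ a; and always a' ≥ a or b' ≥ b. -/
theorem hyperPMF_maximizing_intervals_order (n N M M' a b a' b' : ℕ)
    (hn : 0 < n) (hnN : n ≤ N) (hMM' : M < M') (hM' : M' ≤ N)
    (h1 : PMaximizingInterval n N M a b) (h2 : PMaximizingInterval n N M' a' b') :
    (a' < a → b ≤ b') ∧ (b' < b → a ≤ a') ∧ (a ≤ a' ∨ b ≤ b') := by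
  have key : ¬ (a' < a ∧ b' < b) := by
    rintro ⟨ha, hb⟩
    obtain ⟨hab, hbn, hpos1, hmax1⟩ := h1
    obtain ⟨hab', hbn', hpos2, hmax2⟩ := h2
    have hbmem : b ∈ Finset.Icc a b := Finset.mem_Icc.mpr ⟨hab, le_refl b⟩
    have ha'mem : a' ∈ Finset.Icc a' b' := Finset.mem_Icc.mpr ⟨le_refl a', hab'⟩
    have hbpos := hpos1 b hbmem
    have ha'pos := hpos2 a' ha'mem
    obtain ⟨_, hbM, _⟩ := hyperPMF_pos_imp M n N b hbpos
    obtain ⟨ha'n, _, ha'M'⟩ := hyperPMF_pos_imp M' n N a' ha'pos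
    -- swap inequalities
    have s1 : hyperPMF M n N a' ≤ hyperPMF M n N b :=
      swap_le n N M a b ⟨hab, hbn, hpos1, hmax1⟩ b a' hbmem ha'n
        (by simp [Finset.mem_Icc]; omega)
    have s2 : hyperPMF M' n N b ≤ hyperPMF M' n N a' :=
      swap_le n N M' a' b' ⟨hab', hbn', hpos2, hmax2⟩ a' b ha'mem hbn
        (by simp [Finset.mem_Icc]; omega)
    -- strict inequality from likelihood ratio
    have hchain := lr_chain N M M' n hMM' hM' b a' (by omega) hbM hbn ha'M'
    have hC : 0 < (N.choose n : ℚ) := by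
      exact_mod_cast Nat.cast_pos.mpr (Nat.choose_pos hnN)
    have eq1 : hyperPMF M' n N b = (M'.choose b * (N - M').choose (n - b) : ℚ) / (N.choose n) := by
      simp [hyperPMF, hbn]
    have eq2 : hyperPMF M n N a' = (M.choose a' * (N - M).choose (n - a') : ℚ) / (N.choose n) := by
      simp [hyperPMF, ha'n]
    have eq3 : hyperPMF M' n N a' = (M'.choose a' * (N - M').choose (n - a') : ℚ) / (N.choose n) := by
      simp [hyperPMF, ha'n]
    have eq4 : hyperPMF M n N b = (M.choose b * (N - M).choose (n - b) : ℚ) / (N.choose n) := by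
      simp [hyperPMF, hbn]
    have hchainQ : (M'.choose a' * (N - M').choose (n - a') : ℚ) *
        (M.choose b * (N - M).choose (n - b))
        < (M'.choose b * (N - M').choose (n - b) : ℚ) *
          (M.choose a' * (N - M).choose (n - a')) := by
      exact_mod_cast hchain
    have hstrict : hyperPMF M' n N a' * hyperPMF M n N b
        < hyperPMF M' n N b * hyperPMF M n N a' := by
      rw [eq1, eq2, eq3, eq4, div_mul_div_comm, div_mul_div_comm]
      exact div_lt_div_of_pos_right hchainQ (by positivity)
    have hle : hyperPMF M' n N b * hyperPMF M n N a'
        ≤ hyperPMF M' n N a' * hyperPMF M n N b :=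
      mul_le_mul s2 s1 (hyperPMF_nonneg M n N a') (hyperPMF_nonneg M' n N a')
    linarith
  refine ⟨fun h => by omega, fun h => by omega, by omega⟩
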